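/- Projection into the partial-correctness Hoare logic (general form): for any While statement s, state predicate U and setoid trace predicate P, if ⊢{U} s {P} is derivable in the trace-based Hoare logic, then for any state predicate W, ⊢p {U ∧ W} s {Last([W] ** P)} is derivable in the state-based partial-correctness Hoare logic. -/

import Mathlib

namespace WhileTrace

/-- Program variables. -/
abbrev Var := ℕ
/-- States assign integer values to variables. -/
abbrev State := Var → ℤ
/-- Arithmetic expressions, modelled by their integer value in each state. -/
abbrev Expr := State → ℤ

/-- State update `σ[x ↦ v]`. -/
def update (σ : State) (x : Var) (v : ℤ) : State := Function.update σ x v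

/-- Reading an expression as a boolean: `σ ⊨ e`. -/
def istrue (e : Expr) (σ : State) : Prop := e σ ≠ 0

/-- Traces: nonempty, possibly infinite sequences of states
(a head state together with a possibly infinite sequence of further states). -/
def Trace : Type := State × Stream'.Seq State

/-- The singleton trace `⟨σ⟩`. -/
def Trace.single (σ : State) : Trace := (σ, Stream'.Seq.nil)

/-- The cons trace `σ :: τ`. -/
def Trace.cons (σ : State) (τ : Trace) : Trace := (σ, Stream'.Seq.cons τ.1 τ.2)

/-- The first state of a trace. -/
def Trace.hd (τ : Trace) : State := τ.1

/-- Bisimilarity of traces `τ ≈ τ'`, as a greatest fixed point: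
there is a relation `R` relating the two traces that is consistent with the
coinductive rules `⟨σ⟩ ≈ ⟨σ⟩` and `σ::τ ≈ σ::τ'` whenever `τ ≈ τ'`. -/
def Bisim (τ τ' : Trace) : Prop :=
  ∃ R : Trace → Trace → Prop, R τ τ' ∧
    ∀ a b, R a b →
      (∃ σ, a = Trace.single σ ∧ b = Trace.single σ) ∨
      (∃ σ a' b', a = Trace.cons σ a' ∧ b = Trace.cons σ b' ∧ R a' b')

/-- Finiteness `τ ↓ σ` : `τ` is finite with last state `σ` (inductive). -/
inductive Converges : Trace → State → Prop
  | single (σ : State) : Converges (Trace.single σ) σ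
  | cons (σ' : State) {τ : Trace} {σ : State} :
      Converges τ σ → Converges (Trace.cons σ' τ) σ

/-- Infiniteness of a trace (coinductive, as a greatest fixed point). -/
def InfiniteT (τ : Trace) : Prop :=
  ∃ P : Trace → Prop, P τ ∧ ∀ a, P a → ∃ σ a', a = Trace.cons σ a' ∧ P a'

/-- Statements of the While language. -/
inductive Stmt : Type
  | assign (x : Var) (e : Expr)
  | skip
  | seq (s₀ s₁ : Stmt)
  | ifte (e : Expr) (st sf : Stmt)
  | whileDo (e : Expr) (st : Stmt)

/-- A pair of relations `(E, ES)` is consistent with the rules of evaluation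
and extended evaluation: every claimed evaluation is backed by one of the
coinductive rules, with premises again in `(E, ES)`. -/
def EvalConsistent (E : Stmt → State → Trace → Prop)
    (ES : Stmt → Trace → Trace → Prop) : Prop :=
  (∀ x e σ τ, E (.assign x e) σ τ →
      τ = Trace.cons σ (Trace.single (update σ x (e σ)))) ∧
  (∀ σ τ, E .skip σ τ → τ = Trace.single σ) ∧
  (∀ s₀ s₁ σ τ', E (.seq s₀ s₁) σ τ' → ∃ τ, E s₀ σ τ ∧ ES s₁ τ τ') ∧
  (∀ e st sf σ τ, E (.ifte e st sf) σ τ →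
      (istrue e σ ∧ ES st (Trace.cons σ (Trace.single σ)) τ) ∨
      (¬ istrue e σ ∧ ES sf (Trace.cons σ (Trace.single σ)) τ)) ∧
  (∀ e st σ τ', E (.whileDo e st) σ τ' →
      (istrue e σ ∧ ∃ τ, ES st (Trace.cons σ (Trace.single σ)) τ ∧
        ES (.whileDo e st) τ τ') ∨
      (¬ istrue e σ ∧ τ' = Trace.cons σ (Trace.single σ))) ∧
  (∀ s τ τ', ES s τ τ' →
      (∃ σ, τ = Trace.single σ ∧ E s σ τ') ∨
      (∃ σ τ₀ τ₀', τ = Trace.cons σ τ₀ ∧ τ' = Trace.cons σ τ₀' ∧ ES s τ₀ τ₀'))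

/-- Evaluation `(s,σ) ⇒ τ` : greatest fixed point of the mutual coinductive rules. -/
def Exec (s : Stmt) (σ : State) (τ : Trace) : Prop :=
  ∃ E ES, EvalConsistent E ES ∧ E s σ τ

/-- Extended evaluation `(s,τ) ⇒* τ'`. -/
def ExecSeq (s : Stmt) (τ τ' : Trace) : Prop :=
  ∃ E ES, EvalConsistent E ES ∧ ES s τ τ'

/-- The standard inductive state-based big-step semantics `(s,σ) ⇓ σ'`. -/
inductive BigStep : Stmt → State → State → Prop
  | assign (x : Var) (e : Expr) (σ : State) :
      BigStep (.assign x e) σ (update σ x (e σ))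
  | skip (σ : State) : BigStep .skip σ σ
  | seq {s₀ s₁ : Stmt} {σ σ' σ'' : State} :
      BigStep s₀ σ σ' → BigStep s₁ σ' σ'' → BigStep (.seq s₀ s₁) σ σ''
  | ifTrue {e : Expr} {st sf : Stmt} {σ σ' : State} :
      istrue e σ → BigStep st σ σ' → BigStep (.ifte e st sf) σ σ'
  | ifFalse {e : Expr} {st sf : Stmt} {σ σ' : State} :
      ¬ istrue e σ → BigStep sf σ σ' → BigStep (.ifte e st sf) σ σ'
  | whileTrue {e : Expr} {st : Stmt} {σ σ' σ'' : State} :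
      istrue e σ → BigStep st σ σ' → BigStep (.whileDo e st) σ' σ'' →
      BigStep (.whileDo e st) σ σ''
  | whileFalse {e : Expr} {st : Stmt} {σ : State} :
      ¬ istrue e σ → BigStep (.whileDo e st) σ σ

/-- State predicates. -/
abbrev StatePred := State → Prop
/-- Trace predicates. -/
abbrev TracePred := Trace → Prop

/-- A setoid trace predicate respects bisimilarity. -/
def IsSetoidPred (P : TracePred) : Prop := ∀ τ τ', P τ → Bisim τ τ' → P τ'

/-- The singleton predicate `[U]`. -/
def Sglt (U : StatePred) : TracePred :=
  fun τ => ∃ σ, U σ ∧ τ = Trace.single σ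

/-- The doubleton predicate `⟨U⟩`. -/
def Dup (U : StatePred) : TracePred :=
  fun τ => ∃ σ, U σ ∧ τ = Trace.cons σ (Trace.single σ)

/-- The update predicate `U[x ↦ e]`. -/
def UpdPred (U : StatePred) (x : Var) (e : Expr) : TracePred :=
  fun τ => ∃ σ, U σ ∧ τ = Trace.cons σ (Trace.single (update σ x (e σ)))

/-- `Q follows τ in τ'` (coinductive, as a greatest fixed point). -/
def Follows (Q : TracePred) (τ τ' : Trace) : Prop :=
  ∃ R : Trace → Trace → Prop, R τ τ' ∧
    ∀ a b, R a b →
      (∃ σ, a = Trace.single σ ∧ b.hd = σ ∧ Q b) ∨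
      (∃ σ a' b', a = Trace.cons σ a' ∧ b = Trace.cons σ b' ∧ R a' b')

/-- The chop `P ** Q`. -/
def Chop (P Q : TracePred) : TracePred :=
  fun τ' => ∃ τ, P τ ∧ Follows Q τ τ'

/-- The iteration `P*` (coinductive, as a greatest fixed point). -/
def Iter (P : TracePred) : TracePred := fun τ =>
  ∃ X : TracePred, X τ ∧
    ∀ a, X a → Sglt (fun _ => True) a ∨ ∃ τ₀, P τ₀ ∧ Follows X τ₀ a

/-- `Last P` : states that are the last state of some finite trace satisfying `P`. -/
def Last (P : TracePred) : StatePred := fun σ => ∃ τ, P τ ∧ Converges τ σ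

/-- The trace predicate `finite`. -/
def FiniteT : TracePred := fun τ => ∃ σ, Converges τ σ

/-- Derivability `⊢ {U} s {P}` in the trace-based Hoare logic. -/
inductive THoare : StatePred → Stmt → TracePred → Prop
  | assign (U : StatePred) (x : Var) (e : Expr) :
      THoare U (.assign x e) (UpdPred U x e)
  | skip (U : StatePred) : THoare U .skip (Sglt U)
  | seq {U V : StatePred} {s₀ s₁ : Stmt} {P Q : TracePred} :
      THoare U s₀ (Chop P (Sglt V)) → THoare V s₁ Q →
      THoare U (.seq s₀ s₁) (Chop P Q)
  | ifte {U : StatePred} {e : Expr} {st sf : Stmt} {P : TracePred} :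
      THoare (fun σ => istrue e σ ∧ U σ) st P →
      THoare (fun σ => ¬ istrue e σ ∧ U σ) sf P →
      THoare U (.ifte e st sf) (Chop (Dup U) P)
  | whileDo {U I : StatePred} {e : Expr} {st : Stmt} {P : TracePred} :
      (∀ σ, U σ → I σ) →
      THoare (fun σ => istrue e σ ∧ I σ) st (Chop P (Sglt I)) →
      THoare U (.whileDo e st)
        (Chop (Dup U)
          (Chop (Iter (Chop P (Dup I))) (Sglt (fun σ => ¬ istrue e σ))))
  | conseq {U U' : StatePred} {s : Stmt} {P P' : TracePred} :
      (∀ σ, U σ → U' σ) → THoare U' s P' → (∀ τ, P' τ → P τ) →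
      THoare U s P
  | exist {Z : Type} {U : Z → StatePred} {s : Stmt} {P : Z → TracePred} :
      (∀ z, THoare (U z) s (P z)) →
      THoare (fun σ => ∃ z, U z σ) s (fun τ => ∃ z, P z τ)

/-- Derivability `⊢p {U} s {Z}` in the state-based partial-correctness Hoare logic. -/
inductive PHoare : StatePred → Stmt → StatePred → Prop
  | assign (Z : StatePred) (x : Var) (e : Expr) :
      PHoare (fun σ => Z (update σ x (e σ))) (.assign x e) Z
  | skip (U : StatePred) : PHoare U .skip U
  | seq {U V Z : StatePred} {s₀ s₁ : Stmt} :
      PHoare U s₀ V → PHoare V s₁ Z → PHoare U (.seq s₀ s₁) Z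
  | ifte {U Z : StatePred} {e : Expr} {st sf : Stmt} :
      PHoare (fun σ => istrue e σ ∧ U σ) st Z →
      PHoare (fun σ => ¬ istrue e σ ∧ U σ) sf Z →
      PHoare U (.ifte e st sf) Z
  | whileDo {I : StatePred} {e : Expr} {st : Stmt} :
      PHoare (fun σ => istrue e σ ∧ I σ) st I →
      PHoare I (.whileDo e st) (fun σ => I σ ∧ ¬ istrue e σ)
  | exist {Z : Type} {U V : Z → StatePred} {s : Stmt} :
      (∀ z, PHoare (U z) s (V z)) →
      PHoare (fun σ => ∃ z, U z σ) s (fun σ => ∃ z, V z σ)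
  | conseq {U U' Z Z' : StatePred} {s : Stmt} :
      (∀ σ, U σ → U' σ) → PHoare U' s Z' → (∀ σ, Z' σ → Z σ) →
      PHoare U s Z

/-- Derivability `⊢t {U} s {Z}` in the state-based total-correctness Hoare
logic, with the `while-fun` rule. -/
inductive TotHoare : StatePred → Stmt → StatePred → Prop
  | assign (Z : StatePred) (x : Var) (e : Expr) :
      TotHoare (fun σ => Z (update σ x (e σ))) (.assign x e) Z
  | skip (U : StatePred) : TotHoare U .skip U
  | seq {U V Z : StatePred} {s₀ s₁ : Stmt} :
      TotHoare U s₀ V → TotHoare V s₁ Z → TotHoare U (.seq s₀ s₁) Z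
  | ifte {U Z : StatePred} {e : Expr} {st sf : Stmt} :
      TotHoare (fun σ => istrue e σ ∧ U σ) st Z →
      TotHoare (fun σ => ¬ istrue e σ ∧ U σ) sf Z →
      TotHoare U (.ifte e st sf) Z
  | whileFun {I : StatePred} {e : Expr} {st : Stmt} (t : State → ℕ) (m : ℕ) :
      (∀ n : ℕ, TotHoare (fun σ => istrue e σ ∧ I σ ∧ t σ = n) st
        (fun σ => I σ ∧ t σ < n)) →
      TotHoare (fun σ => I σ ∧ t σ = m) (.whileDo e st)
        (fun σ => I σ ∧ t σ ≤ m ∧ ¬ istrue e σ)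
  | exist {Z : Type} {U V : Z → StatePred} {s : Stmt} :
      (∀ z, TotHoare (U z) s (V z)) →
      TotHoare (fun σ => ∃ z, U z σ) s (fun σ => ∃ z, V z σ)
  | conseq {U U' Z Z' : StatePred} {s : Stmt} :
      (∀ σ, U σ → U' σ) → TotHoare U' s Z' → (∀ σ, Z' σ → Z σ) →
      TotHoare U s Z

/-! ### Basic trace lemmas -/

lemma trace_cases (τ : Trace) :
    (∃ σ, τ = Trace.single σ) ∨ (∃ σ τ', τ = Trace.cons σ τ') := by
  obtain ⟨σ, s⟩ := τ
  rcases h : Stream'.Seq.destruct s with _ | ⟨a, s'⟩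
  · left
    exact ⟨σ, by rw [Stream'.Seq.destruct_eq_none h]; rfl⟩
  · right
    exact ⟨σ, (a, s'), by rw [Stream'.Seq.destruct_eq_cons h]; rfl⟩

lemma single_ne_cons {σ σ' : State} {τ : Trace} :
    Trace.single σ ≠ Trace.cons σ' τ := by
  intro h
  have h2 := congrArg (fun t : Trace => t.2.head) h
  simp [Trace.single, Trace.cons, Stream'.Seq.head_nil, Stream'.Seq.head_cons] at h2

lemma single_inj {σ σ' : State} (h : Trace.single σ = Trace.single σ') : σ = σ' :=
  congrArg Prod.fst h

lemma cons_inj {σ σ' : State} {τ τ' : Trace}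
    (h : Trace.cons σ τ = Trace.cons σ' τ') : σ = σ' ∧ τ = τ' := by
  have h1 : σ = σ' := congrArg Prod.fst h
  have h2 : Stream'.Seq.cons τ.1 τ.2 = Stream'.Seq.cons τ'.1 τ'.2 := congrArg Prod.snd h
  have hh := congrArg Stream'.Seq.head h2
  rw [Stream'.Seq.head_cons, Stream'.Seq.head_cons] at hh
  have ht := congrArg Stream'.Seq.tail h2
  rw [Stream'.Seq.tail_cons, Stream'.Seq.tail_cons] at ht
  exact ⟨h1, Prod.ext (Option.some.inj hh) ht⟩

lemma hd_single (σ : State) : (Trace.single σ).hd = σ := rfl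
lemma hd_cons (σ : State) (τ : Trace) : (Trace.cons σ τ).hd = σ := rfl

lemma converges_single_inv {σ σ' : State} (h : Converges (Trace.single σ) σ') :
    σ' = σ := by
  generalize hq : Trace.single σ = q at h
  cases h with
  | single σ₀ => exact (single_inj hq).symm
  | cons σ₀ h' => exact absurd hq single_ne_cons

lemma converges_cons_inv {σ' σ : State} {τ : Trace}
    (h : Converges (Trace.cons σ' τ) σ) : Converges τ σ := by
  generalize hq : Trace.cons σ' τ = q at h
  cases h with
  | single σ₀ => exact absurd hq.symm single_ne_cons
  | @cons σ₀ τ₀ σ₁ h' => exact (cons_inj hq).2 ▸ h'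

/-! ### Follows lemmas -/

lemma follows_elim {Q : TracePred} {τ τ' : Trace} (h : Follows Q τ τ') :
    (∃ σ, τ = Trace.single σ ∧ τ'.hd = σ ∧ Q τ') ∨
    (∃ σ a' b', τ = Trace.cons σ a' ∧ τ' = Trace.cons σ b' ∧ Follows Q a' b') := by
  obtain ⟨R, hR, hcons⟩ := h
  rcases hcons _ _ hR with h1 | ⟨σ, a', b', ha, hb, hR'⟩
  · exact Or.inl h1
  · exact Or.inr ⟨σ, a', b', ha, hb, R, hR', hcons⟩

lemma follows_mono {Q Q' : TracePred} (hQQ : ∀ b, Q b → Q' b) {τ τ' : Trace}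
    (h : Follows Q τ τ') : Follows Q' τ τ' := by
  obtain ⟨R, hR, hcons⟩ := h
  refine ⟨R, hR, fun a b hab => ?_⟩
  rcases hcons a b hab with ⟨σ, h1, h2, h3⟩ | h'
  · exact Or.inl ⟨σ, h1, h2, hQQ _ h3⟩
  · exact Or.inr h'

lemma follows_single {Q : TracePred} {σ : State} {τ' : Trace}
    (hhd : τ'.hd = σ) (hQ : Q τ') : Follows Q (Trace.single σ) τ' := by
  refine ⟨fun a b => a = Trace.single σ ∧ b = τ', ⟨rfl, rfl⟩, fun a b hab => ?_⟩
  exact Or.inl ⟨σ, hab.1, hab.2 ▸ hhd, hab.2 ▸ hQ⟩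

lemma follows_cons {Q : TracePred} {σ : State} {τ τ' : Trace}
    (h : Follows Q τ τ') : Follows Q (Trace.cons σ τ) (Trace.cons σ τ') := by
  obtain ⟨R, hR, hcons⟩ := h
  refine ⟨fun a b => R a b ∨ (a = Trace.cons σ τ ∧ b = Trace.cons σ τ'),
    Or.inr ⟨rfl, rfl⟩, fun a b hab => ?_⟩
  rcases hab with hab | ⟨ha, hb⟩
  · rcases hcons a b hab with h1 | ⟨σ', a', b', h1, h2, h3⟩
    · exact Or.inl h1
    · exact Or.inr ⟨σ', a', b', h1, h2, Or.inl h3⟩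
  · exact Or.inr ⟨σ, τ, τ', ha, hb, Or.inl hR⟩

lemma follows_hd {Q : TracePred} {τ τ' : Trace} (h : Follows Q τ τ') :
    τ'.hd = τ.hd := by
  rcases follows_elim h with ⟨σ, h1, h2, _⟩ | ⟨σ, a', b', h1, h2, _⟩
  · rw [h1, hd_single, h2]
  · rw [h1, h2, hd_cons, hd_cons]

lemma follows_refl {Q : TracePred} {τ : Trace} {σ : State}
    (hc : Converges τ σ) (hQ : Q (Trace.single σ)) : Follows Q τ τ := by
  refine ⟨fun a b => a = b ∧ Converges a σ, ⟨rfl, hc⟩, fun a b hab => ?_⟩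
  obtain ⟨rfl, hca⟩ := hab
  rcases trace_cases a with ⟨σ', rfl⟩ | ⟨σ', a', rfl⟩
  · have h := converges_single_inv hca
    exact Or.inl ⟨σ', rfl, rfl, h ▸ hQ⟩
  · exact Or.inr ⟨σ', a', a', rfl, rfl, rfl, converges_cons_inv hca⟩

lemma follows_sglt_converges {V : StatePred} {τ' : Trace} {σ' : State}
    (hc : Converges τ' σ') :
    ∀ τ, Follows (Sglt V) τ τ' → Converges τ σ' ∧ V σ' := by
  induction hc with
  | single σ =>
    intro τ hf
    rcases follows_elim hf with ⟨σ₀, rfl, h2, σ₁, hV, h4⟩ | ⟨σ₀, a', b', _, hb, _⟩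
    · have h5 : σ₁ = σ := single_inj h4.symm
      subst h5
      have h6 : σ₀ = σ₁ := by rw [← h2, hd_single]
      subst h6
      exact ⟨Converges.single σ₀, hV⟩
    · exact absurd hb single_ne_cons
  | @cons σ₀ τ₀ σF hc ih =>
    intro τ hf
    rcases follows_elim hf with ⟨σ₁, rfl, h2, σ₂, hV, h4⟩ | ⟨σ₁, a', b', ha, hb, hf'⟩
    · exact absurd h4.symm single_ne_cons
    · obtain ⟨h5, h6⟩ := cons_inj hb
      obtain ⟨hca, hVa⟩ := ih a' (h6 ▸ hf')
      exact ⟨ha ▸ Converges.cons σ₁ hca, hVa⟩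

/-! ### Appending traces -/

inductive Appends : Trace → Trace → Trace → Prop
  | single (σ : State) (τ : Trace) : τ.hd = σ → Appends (Trace.single σ) τ τ
  | cons (σ : State) {τ₁ τ₂ τ₃ : Trace} :
      Appends τ₁ τ₂ τ₃ → Appends (Trace.cons σ τ₁) τ₂ (Trace.cons σ τ₃)

lemma appends_exists {τ₁ : Trace} {σ : State} (hc : Converges τ₁ σ) :
    ∀ τ₂ : Trace, τ₂.hd = σ → ∃ τ₃, Appends τ₁ τ₂ τ₃ := by
  induction hc with
  | single σ' => exact fun τ₂ hhd => ⟨τ₂, Appends.single σ' τ₂ hhd⟩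
  | cons σ' hc ih =>
    intro τ₂ hhd
    obtain ⟨τ₃, h⟩ := ih τ₂ hhd
    exact ⟨Trace.cons σ' τ₃, Appends.cons σ' h⟩

lemma appends_hd {τ₁ τ₂ τ₃ : Trace} (h : Appends τ₁ τ₂ τ₃) : τ₃.hd = τ₁.hd := by
  induction h with
  | single σ τ h => rw [h, hd_single]
  | cons σ h ih => rw [hd_cons, hd_cons]

lemma appends_converges {τ₁ τ₂ τ₃ : Trace} (h : Appends τ₁ τ₂ τ₃) :
    ∀ σ, Converges τ₂ σ → Converges τ₃ σ := by
  induction h with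
  | single _ _ _ => exact fun σ hc => hc
  | cons σ' h ih => exact fun σ hc => Converges.cons σ' (ih σ hc)

lemma appends_follows {Q : TracePred} {τ₁ τ₂ τ₃ : Trace}
    (h : Appends τ₁ τ₂ τ₃) : Q τ₂ → Follows Q τ₁ τ₃ := by
  induction h with
  | single σ τ hh => exact fun hQ => follows_single hh hQ
  | cons σ h ih => exact fun hQ => follows_cons (ih hQ)

lemma follows_appends {Q : TracePred} {τ₀ b τ₂ a : Trace}
    (hf : Follows Q τ₀ b) (hap : Appends b τ₂ a) :
    Follows (fun c => ∃ b', Q b' ∧ Appends b' τ₂ c) τ₀ a := by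
  refine ⟨fun x y => ∃ b', Follows Q x b' ∧ Appends b' τ₂ y, ⟨b, hf, hap⟩,
    fun x y hxy => ?_⟩
  obtain ⟨b', hfb, hab⟩ := hxy
  rcases follows_elim hfb with ⟨σ, rfl, hhd, hQb⟩ | ⟨σ, x', b'', rfl, rfl, hf'⟩
  · exact Or.inl ⟨σ, rfl, by rw [appends_hd hab, hhd], b', hQb, hab⟩
  · generalize hq : Trace.cons σ b'' = q at hab
    cases hab with
    | single σ' τ hh => exact absurd hq.symm single_ne_cons
    | @cons σ' τa τb τc hab' =>
      obtain ⟨h1, h2⟩ := cons_inj hq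
      subst h1
      exact Or.inr ⟨σ, x', τc, rfl, rfl, b'', hf', by rw [h2]; exact hab'⟩

/-! ### Iteration lemmas -/

lemma iter_single {R : TracePred} (σ : State) : Iter R (Trace.single σ) := by
  refine ⟨fun a => ∃ σ', a = Trace.single σ', ⟨σ, rfl⟩, fun a ha => ?_⟩
  obtain ⟨σ', rfl⟩ := ha
  exact Or.inl ⟨σ', trivial, rfl⟩

lemma iter_snoc {R : TracePred} {τ₁ τ₂ τ₃ : Trace} {σ₂ : State}
    (h1 : Iter R τ₁) (hR : R τ₂) (hc2 : Converges τ₂ σ₂)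
    (hap : Appends τ₁ τ₂ τ₃) : Iter R τ₃ := by
  refine ⟨fun a => Iter R a ∨ ∃ b, Iter R b ∧ Appends b τ₂ a,
    Or.inr ⟨τ₁, h1, hap⟩, fun a ha => ?_⟩
  rcases ha with hIt | ⟨b, hIb, hab⟩
  · obtain ⟨X, hXa, hX⟩ := hIt
    rcases hX a hXa with h | ⟨τ₀, hRτ, hfX⟩
    · exact Or.inl h
    · exact Or.inr ⟨τ₀, hRτ, follows_mono (fun c hc => Or.inl ⟨X, hc, hX⟩) hfX⟩
  · obtain ⟨X, hXb, hX⟩ := hIb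
    rcases hX b hXb with ⟨σ, _, rfl⟩ | ⟨τ₀, hRτ, hfX⟩
    · generalize hq : Trace.single σ = q at hab
      cases hab with
      | single σ' τ hh =>
        exact Or.inr ⟨τ₂, hR, follows_refl hc2 (Or.inl (iter_single σ₂))⟩
      | cons σ' hab' => exact absurd hq single_ne_cons
    · have hfq := follows_appends hfX hab
      refine Or.inr ⟨τ₀, hRτ, follows_mono ?_ hfq⟩
      rintro c ⟨b', hXb', hab'⟩
      exact Or.inr ⟨b', ⟨X, hXb', hX⟩, hab'⟩

/-! ### Last-Chop lemmas -/

lemma lastChop_intro {W : StatePred} {P : TracePred} {τ : Trace} {σ : State}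
    (hW : W τ.hd) (hP : P τ) (hc : Converges τ σ) :
    Last (Chop (Sglt W) P) σ :=
  ⟨τ, ⟨Trace.single τ.hd, ⟨τ.hd, hW, rfl⟩, follows_single rfl hP⟩, hc⟩

lemma lastChop_elim {W : StatePred} {P : TracePred} {σ : State}
    (h : Last (Chop (Sglt W) P) σ) :
    ∃ τ, W τ.hd ∧ P τ ∧ Converges τ σ := by
  obtain ⟨τ', ⟨τ₀, ⟨σ₀, hW, rfl⟩, hf⟩, hc⟩ := h
  rcases follows_elim hf with ⟨σ₁, h1, h2, hP⟩ | ⟨σ₁, a', b', h1, _, _⟩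
  · have h3 : σ₁ = σ₀ := single_inj h1.symm
    subst h3
    exact ⟨τ', h2 ▸ hW, hP, hc⟩
  · exact absurd h1 single_ne_cons
/-- Projection into the partial-correctness Hoare logic (general form). -/
theorem tHoare_project_general (s : Stmt) (U : StatePred) (P : TracePred)
    (hP : IsSetoidPred P) (h : THoare U s P) :
    ∀ W : StatePred, PHoare (fun σ => U σ ∧ W σ) s (Last (Chop (Sglt W) P)) := by
  clear hP
  induction h with
  | assign U x e =>
    intro W
    refine PHoare.conseq ?_
      (PHoare.assign (Last (Chop (Sglt W) (UpdPred U x e))) x e) (fun σ hz => hz)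
    rintro σ ⟨hU, hW⟩
    exact lastChop_intro (τ := Trace.cons σ (Trace.single (update σ x (e σ))))
      hW ⟨σ, hU, rfl⟩ (Converges.cons σ (Converges.single _))
  | skip U =>
    intro W
    refine PHoare.conseq (fun σ hz => hz) (PHoare.skip _) ?_
    rintro σ ⟨hU, hW⟩
    exact lastChop_intro (τ := Trace.single σ) hW ⟨σ, hU, rfl⟩ (Converges.single σ)
  | @seq U V s₀ s₁ P Q h0 h1 ih0 ih1 =>
    intro W
    have H0 : PHoare (fun σ => U σ ∧ W σ) s₀
        (fun σ' => V σ' ∧ ∃ τ, W τ.hd ∧ P τ ∧ Converges τ σ') := by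
      refine PHoare.conseq (fun σ hz => hz) (ih0 W) ?_
      intro σ' hL
      obtain ⟨τ', hW', hCh, hc⟩ := lastChop_elim hL
      obtain ⟨τ, hPτ, hf⟩ := hCh
      obtain ⟨hcτ, hV⟩ := follows_sglt_converges hc τ hf
      refine ⟨hV, τ, ?_, hPτ, hcτ⟩
      rw [← follows_hd hf]; exact hW'
    refine PHoare.seq H0 (PHoare.conseq (fun σ hz => hz)
      (ih1 (fun σ' => ∃ τ, W τ.hd ∧ P τ ∧ Converges τ σ')) ?_)
    intro σ'' hL
    obtain ⟨τ'', hW'', hQ, hc''⟩ := lastChop_elim hL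
    obtain ⟨τ, hWτ, hPτ, hcτ⟩ := hW''
    obtain ⟨τ₃, hap⟩ := appends_exists hcτ τ'' rfl
    refine lastChop_intro ?_ ⟨τ, hPτ, appends_follows hap hQ⟩
      (appends_converges hap σ'' hc'')
    rw [appends_hd hap]; exact hWτ
  | @ifte U e st sf P ht hf iht ihf =>
    intro W
    have post : ∀ σ'', Last (Chop (Sglt (fun σ => U σ ∧ W σ)) P) σ'' →
        Last (Chop (Sglt W) (Chop (Dup U) P)) σ'' := by
      intro σ'' hL
      obtain ⟨τ, ⟨hUτ, hWτ⟩, hPτ, hc⟩ := lastChop_elim hL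
      refine lastChop_intro (τ := Trace.cons τ.hd τ)
        hWτ ⟨Trace.cons τ.hd (Trace.single τ.hd), ⟨τ.hd, hUτ, rfl⟩,
          follows_cons (follows_single rfl hPτ)⟩ (Converges.cons τ.hd hc)
    exact PHoare.ifte
      (PHoare.conseq (fun σ hz => ⟨⟨hz.1, hz.2.1⟩, hz.2⟩)
        (iht (fun σ => U σ ∧ W σ)) post)
      (PHoare.conseq (fun σ hz => ⟨⟨hz.1, hz.2.1⟩, hz.2⟩)
        (ihf (fun σ => U σ ∧ W σ)) post)
  | @whileDo U I e st P hUI hbody ih =>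
    intro W
    have hbodyP : PHoare
        (fun σ => istrue e σ ∧ (I σ ∧ ∃ σ₀ τit, U σ₀ ∧ W σ₀ ∧ τit.hd = σ₀ ∧
          Iter (Chop P (Dup I)) τit ∧ Converges τit σ)) st
        (fun σ => I σ ∧ ∃ σ₀ τit, U σ₀ ∧ W σ₀ ∧ τit.hd = σ₀ ∧
          Iter (Chop P (Dup I)) τit ∧ Converges τit σ) := by
      refine PHoare.conseq (fun σ hz => ⟨⟨hz.1, hz.2.1⟩, hz⟩)
        (ih (fun σ => istrue e σ ∧ (I σ ∧ ∃ σ₀ τit, U σ₀ ∧ W σ₀ ∧ τit.hd = σ₀ ∧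
          Iter (Chop P (Dup I)) τit ∧ Converges τit σ))) ?_
      intro σ'' hL
      obtain ⟨τ', hW', hCh, hc'⟩ := lastChop_elim hL
      obtain ⟨τp, hPp, hfI⟩ := hCh
      obtain ⟨hcp, hIσ''⟩ := follows_sglt_converges hc' τp hfI
      obtain ⟨he', hI', σ₀, τit, hU0, hW0, hhd, hIter, hcit⟩ := hW'
      -- build one iteration trace τR = τp ++ (σ''::⟨σ''⟩)
      obtain ⟨τR, hapR⟩ := appends_exists hcp
        (Trace.cons σ'' (Trace.single σ'')) rfl
      have hRτR : Chop P (Dup I) τR :=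
        ⟨τp, hPp, appends_follows hapR ⟨σ'', hIσ'', rfl⟩⟩
      have hcR : Converges τR σ'' :=
        appends_converges hapR σ'' (Converges.cons σ'' (Converges.single σ''))
      -- extend the iteration
      have hhdR : τR.hd = τ'.hd := by
        rw [appends_hd hapR, follows_hd hfI]
      obtain ⟨τit', hapIt⟩ := appends_exists hcit τR hhdR
      refine ⟨hIσ'', σ₀, τit', hU0, hW0, ?_, iter_snoc hIter hRτR hcR hapIt,
        appends_converges hapIt σ'' hcR⟩
      rw [appends_hd hapIt]; exact hhd
    refine PHoare.conseq ?_ (PHoare.whileDo hbodyP) ?_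
    · rintro σ ⟨hU, hW⟩
      exact ⟨hUI σ hU, σ, Trace.single σ, hU, hW, rfl, iter_single σ,
        Converges.single σ⟩
    · rintro σ ⟨⟨hI, σ₀, τit, hU0, hW0, hhd, hIter, hcit⟩, hne⟩
      have hC2 : Chop (Iter (Chop P (Dup I))) (Sglt (fun σ' => ¬ istrue e σ')) τit :=
        ⟨τit, hIter, follows_refl hcit ⟨σ, hne, rfl⟩⟩
      refine lastChop_intro (τ := Trace.cons σ₀ τit) hW0
        ⟨Trace.cons σ₀ (Trace.single σ₀), ⟨σ₀, hU0, rfl⟩,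
          follows_cons (follows_single hhd hC2)⟩ (Converges.cons σ₀ hcit)
  | @conseq U U' s P P' hUU' h' hPP' ih =>
    intro W
    refine PHoare.conseq (fun σ hz => ⟨hUU' σ hz.1, hz.2⟩) (ih W) ?_
    intro σ' hL
    obtain ⟨τ, hW, hP', hc⟩ := lastChop_elim hL
    exact lastChop_intro hW (hPP' τ hP') hc
  | @exist Z U s P hz ihz =>
    intro W
    refine PHoare.conseq ?_ (PHoare.exist (fun z => ihz z W)) ?_
    · rintro σ ⟨⟨z, hU⟩, hW⟩
      exact ⟨z, hU, hW⟩
    · rintro σ' ⟨z, hL⟩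
      obtain ⟨τ, hW, hPτ, hc⟩ := lastChop_elim hL
      exact lastChop_intro hW ⟨z, hPτ⟩ hc

end WhileTrace
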